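/- Let m1,…,mp, T ∈ ℕ with 2(m1+⋯+mp) ≤ T and let t1 < ⋯ < t_T be real numbers. Suppose G(t) = Σ_{j=1}^p P_j(t)e^{μ_j t} and G̃(t) = Σ_{j=1}^p P̃_j(t)e^{μ̃_j t}, where P_j, P̃_j are polynomials of degree at most m_j - 1, the μ_j are pairwise distinct, and the μ̃_j are pairwise distinct. If G(t_l) = G̃(t_l) for l = 1,…,T, then after a suitable re-indexing, P_j = P̃_j for all j, and μ_j = μ̃_j for all j with P_j ≢ 0. -/

import Mathlib

open Polynomial Finset

lemma expPoly_hasDerivAt (s : Finset ℝ) (Q : ℝ → Polynomial ℝ) (x : ℝ) :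
    HasDerivAt (fun y => ∑ ν ∈ s, (Q ν).eval y * Real.exp (ν * y))
      (∑ ν ∈ s, ((Q ν).derivative + Polynomial.C ν * Q ν).eval x * Real.exp (ν * x)) x := by
  apply HasDerivAt.fun_sum
  intro ν _
  have h1 := (Q ν).hasDerivAt x
  have h2 : HasDerivAt (fun y : ℝ => Real.exp (ν * y)) (Real.exp (ν * x) * ν) x :=
by
    simpa using ((hasDerivAt_id x).const_mul ν).exp
  have h3 : HasDerivAt (fun y => (Q ν).eval y * Real.exp (ν * y)) _ x := h1.mul h2
  refine h3.congr_deriv ?_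
  simp only [Polynomial.eval_add, Polynomial.eval_mul, Polynomial.eval_C]
  ring

lemma poly_zero_of_ode (Q : Polynomial ℝ) (c : ℝ) (hc : c ≠ 0)
    (h : Q.derivative + Polynomial.C c * Q = 0) : Q = 0 := by
  by_contra hQ
  have h1 : (Q.derivative + Polynomial.C c * Q).coeff Q.natDegree = 0 := by rw [h]; simp
  rw [Polynomial.coeff_add, Polynomial.coeff_C_mul, Polynomial.coeff_derivative] at h1
  have h2 : Q.coeff (Q.natDegree + 1) = 0 :=
    Polynomial.coeff_eq_zero_of_natDegree_lt (Nat.lt_succ_self _)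
  rw [h2] at h1
  simp only [zero_mul, zero_add] at h1
  exact hQ (Polynomial.leadingCoeff_eq_zero.mp ((mul_eq_zero.mp h1).resolve_left hc))

lemma rolle_chain (F : ℝ → ℝ) (hF : ∀ x, DifferentiableAt ℝ F x) (M : ℕ)
    (t : Fin (M + 1) → ℝ) (ht : StrictMono t) (hz : ∀ l, F (t l) = 0) :
    ∃ t' : Fin M → ℝ, StrictMono t' ∧ ∀ i, deriv F (t' i) = 0 := by
  have h : ∀ i : Fin M, ∃ c ∈ Set.Ioo (t i.castSucc) (t i.succ), deriv F c = 0 := fun i =>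
    exists_deriv_eq_zero (ht (Fin.castSucc_lt_succ (i := i)))
      (fun x _ => (hF x).continuousAt.continuousWithinAt) (by rw [hz, hz])
  choose t' ht' hd using h
  refine ⟨t', ?_, hd⟩
  intro i j hij
  have h1 : t' i < t i.succ := (ht' i).2
  have h2 : t j.castSucc < t' j := (ht' j).1
  have h3 : t i.succ ≤ t j.castSucc := ht.monotone (by
    simp only [Fin.le_def, Fin.val_succ, Fin.coe_castSucc]
    exact hij)
  linarith

lemma expPoly_key (N : ℕ) : ∀ (s : Finset ℝ) (Q : ℝ → Polynomial ℝ),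
    (∑ ν ∈ s.filter (fun ν => Q ν ≠ 0), ((Q ν).natDegree + 1)) ≤ N →
    ∀ (M : ℕ), N ≤ M → ∀ (t : Fin M → ℝ), StrictMono t →
    (∀ l, ∑ ν ∈ s, (Q ν).eval (t l) * Real.exp (ν * t l) = 0) →
    ∀ ν ∈ s, Q ν = 0 := by
  classical
  induction N with
  | zero =>
    intro s Q hdeg M hM t ht hz ν hν
    by_contra hQν
    have hmem : ν ∈ s.filter (fun ν => Q ν ≠ 0) := mem_filter.mpr ⟨hν, hQν⟩
    have h2 : (Q ν).natDegree + 1 ≤ ∑ ν ∈ s.filter (fun ν => Q ν ≠ 0), ((Q ν).natDegree + 1) :=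
      Finset.single_le_sum (f := fun ν => (Q ν).natDegree + 1) (fun _ _ => Nat.zero_le _) hmem
    omega
  | succ N ih =>
    intro s Q hdeg M hM t ht hz
    rcases Finset.eq_empty_or_nonempty (s.filter fun ν => Q ν ≠ 0) with hfe | ⟨ν₀, hν₀⟩
    · intro ν hν
      by_contra hQν
      have hmem : ν ∈ s.filter (fun ν => Q ν ≠ 0) := mem_filter.mpr ⟨hν, hQν⟩
      rw [hfe] at hmem
      exact absurd hmem (Finset.notMem_empty ν)
    exfalso
    obtain ⟨hν₀s, hQ0⟩ := mem_filter.mp hν₀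
    set g : ℝ → ℝ := fun ν => ν - ν₀ with hg
    have hginj : Function.Injective g := fun a b h => by simpa [hg] using h
    set s₁ : Finset ℝ := s.image g with hs₁
    set Q₁ : ℝ → Polynomial ℝ := fun ν => Q (ν + ν₀) with hQ₁
    set R₁ : ℝ → Polynomial ℝ := fun ν => (Q₁ ν).derivative + Polynomial.C ν * Q₁ ν with hR₁
    have hQ₁g : ∀ ν, Q₁ (g ν) = Q ν := fun ν => by simp [hQ₁, hg]
    have hRg : ∀ ν, R₁ (g ν) = (Q ν).derivative + Polynomial.C (ν - ν₀) * Q ν := by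
      intro ν; simp [hR₁, hQ₁, hg]
    set F₁ : ℝ → ℝ := fun x => ∑ ν ∈ s₁, (Q₁ ν).eval x * Real.exp (ν * x) with hF₁def
    have hF₁ : ∀ x, F₁ x = (∑ ν ∈ s, (Q ν).eval x * Real.exp (ν * x)) * Real.exp (-(ν₀ * x)) := by
      intro x
      show (∑ ν ∈ s.image g, (Q₁ ν).eval x * Real.exp (ν * x)) = _
      rw [Finset.sum_image (fun a _ b _ h => hginj h), Finset.sum_mul]
      refine Finset.sum_congr rfl fun ν _ => ?_
      rw [hQ₁g, mul_assoc, ← Real.exp_add]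
      simp only [hg]
      ring_nf
    have hF₁z : ∀ l, F₁ (t l) = 0 := fun l => by rw [hF₁, hz l, zero_mul]
    have hD : ∀ x, HasDerivAt F₁ (∑ ν ∈ s₁, (R₁ ν).eval x * Real.exp (ν * x)) x :=
      fun x => expPoly_hasDerivAt s₁ Q₁ x
    obtain ⟨M', rfl⟩ : ∃ M', M = M' + 1 := ⟨M - 1, by omega⟩
    obtain ⟨t', ht', hd'⟩ := rolle_chain F₁ (fun x => (hD x).differentiableAt) M' t ht hF₁z
    have hz' : ∀ i, ∑ ν ∈ s₁, (R₁ ν).eval (t' i) * Real.exp (ν * t' i) = 0 := by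
      intro i; rw [← (hD (t' i)).deriv]; exact hd' i
    have hsub : s.filter (fun ν => R₁ (g ν) ≠ 0) ⊆ s.filter (fun ν => Q ν ≠ 0) := by
      intro ν hν
      obtain ⟨h1, h2⟩ := mem_filter.mp hν
      refine mem_filter.mpr ⟨h1, fun h => h2 ?_⟩
      rw [hRg, h]; simp
    -- weight bound
    set b : ℝ → ℕ := fun ν => if ν = ν₀ then (Q ν₀).natDegree else (Q ν).natDegree + 1 with hb
    have hweight : (∑ ν ∈ s₁.filter (fun ν => R₁ ν ≠ 0), ((R₁ ν).natDegree + 1)) ≤ N := by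
      rw [hs₁, Finset.filter_image, Finset.sum_image (fun a _ b _ h => hginj h)]
      have step1 : (∑ ν ∈ s.filter (fun ν => R₁ (g ν) ≠ 0), ((R₁ (g ν)).natDegree + 1))
          ≤ ∑ ν ∈ s.filter (fun ν => R₁ (g ν) ≠ 0), b ν := by
        refine Finset.sum_le_sum fun ν hν => ?_
        have hne := (mem_filter.mp hν).2
        by_cases hcase : ν = ν₀
        · subst hcase
          have hder : R₁ (g ν) = (Q ν).derivative := by rw [hRg]; simp
          rw [hder] at hne ⊢
          have hd0 : (Q ν).natDegree ≠ 0 := by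
            intro h0
            rw [Polynomial.eq_C_of_natDegree_eq_zero h0] at hne
            simp at hne
          have := Polynomial.natDegree_derivative_le (Q ν)
          simp only [hb, if_pos rfl]
          omega
        · have h1 : (R₁ (g ν)).natDegree ≤ (Q ν).natDegree := by
            rw [hRg]
            refine (Polynomial.natDegree_add_le _ _).trans (max_le ?_ ?_)
            · exact (Polynomial.natDegree_derivative_le _).trans (Nat.sub_le _ _)
            · exact Polynomial.natDegree_C_mul_le _ _
          simp only [hb, if_neg hcase]
          omega
      have step2 : (∑ ν ∈ s.filter (fun ν => R₁ (g ν) ≠ 0), b ν)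
          ≤ ∑ ν ∈ s.filter (fun ν => Q ν ≠ 0), b ν :=
        Finset.sum_le_sum_of_subset hsub
      have step3 : (∑ ν ∈ s.filter (fun ν => Q ν ≠ 0), b ν) + 1
          ≤ ∑ ν ∈ s.filter (fun ν => Q ν ≠ 0), ((Q ν).natDegree + 1) := by
        have e1 : (b ν₀) + ∑ ν ∈ (s.filter (fun ν => Q ν ≠ 0)).erase ν₀, b ν
            = ∑ ν ∈ s.filter (fun ν => Q ν ≠ 0), b ν := Finset.add_sum_erase _ b hν₀
        have e2 : ((Q ν₀).natDegree + 1) +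
            ∑ ν ∈ (s.filter (fun ν => Q ν ≠ 0)).erase ν₀, ((Q ν).natDegree + 1)
            = ∑ ν ∈ s.filter (fun ν => Q ν ≠ 0), ((Q ν).natDegree + 1) :=
          Finset.add_sum_erase _ (fun ν => (Q ν).natDegree + 1) hν₀
        have e3 : ∑ ν ∈ (s.filter (fun ν => Q ν ≠ 0)).erase ν₀, b ν
            = ∑ ν ∈ (s.filter (fun ν => Q ν ≠ 0)).erase ν₀, ((Q ν).natDegree + 1) :=
          Finset.sum_congr rfl fun ν hν => by
            simp only [hb, if_neg (Finset.ne_of_mem_erase hν)]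
        have e4 : b ν₀ = (Q ν₀).natDegree := by simp [hb]
        omega
      omega
    have hall : ∀ ν ∈ s, R₁ (g ν) = 0 := fun ν hν =>
      ih s₁ R₁ hweight M' (by omega) t' ht' hz' (g ν) (Finset.mem_image_of_mem g hν)
    have hQν₀C : ∃ a : ℝ, Q ν₀ = Polynomial.C a := by
      have h := hall ν₀ hν₀s
      rw [hRg] at h
      simp only [sub_self, map_zero, zero_mul, add_zero] at h
      exact ⟨(Q ν₀).coeff 0, Polynomial.eq_C_of_natDegree_eq_zero
        (Polynomial.natDegree_eq_zero_of_derivative_eq_zero h)⟩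
    have hothers : ∀ ν ∈ s, ν ≠ ν₀ → Q ν = 0 := by
      intro ν hν hne
      have h := hall ν hν
      rw [hRg] at h
      exact poly_zero_of_ode _ _ (sub_ne_zero.mpr hne) h
    obtain ⟨a, ha⟩ := hQν₀C
    have h0 := hz 0
    rw [Finset.sum_eq_single_of_mem ν₀ hν₀s (fun ν hν hne => by rw [hothers ν hν hne]; simp)] at h0
    rw [ha] at h0
    simp only [Polynomial.eval_C] at h0
    have ha0 : a = 0 := by
      rcases mul_eq_zero.mp h0 with h | h
      · exact h
      · exact absurd h (Real.exp_ne_zero _)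
    exact hQ0 (by rw [ha, ha0, map_zero])

theorem stmt_9 (p T : ℕ) (m : Fin p → ℕ) (hm : ∀ j, 1 ≤ m j)
    (hT : 2 * (∑ j, m j) ≤ T)
    (t : Fin T → ℝ) (ht : StrictMono t)
    (μ μt : Fin p → ℝ) (hμ : Function.Injective μ) (hμt : Function.Injective μt)
    (P Pt : Fin p → Polynomial ℝ)
    (hP : ∀ j, (P j).natDegree < m j) (hPt : ∀ j, (Pt j).natDegree < m j)
    (hinterp : ∀ l : Fin T,
      (∑ j, (P j).eval (t l) * Real.exp (μ j * t l)) =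
        ∑ j, (Pt j).eval (t l) * Real.exp (μt j * t l)) :
    ∃ σ : Equiv.Perm (Fin p),
      (∀ j, P j = Pt (σ j)) ∧ ∀ j, P j ≠ 0 → μ j = μt (σ j) := by
  classical
  set s : Finset ℝ := (Finset.univ.image μ) ∪ (Finset.univ.image μt) with hs
  set A : ℝ → Finset (Fin p) := fun ν => Finset.univ.filter (fun j => μ j = ν) with hA
  set B : ℝ → Finset (Fin p) := fun ν => Finset.univ.filter (fun j => μt j = ν) with hB
  set Q : ℝ → Polynomial ℝ := fun ν => (∑ j ∈ A ν, P j) - (∑ j ∈ B ν, Pt j) with hQ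
  have hAj : ∀ j, A (μ j) = {j} := by
    intro j; ext i
    simp [hA, hμ.eq_iff]
  have hBj : ∀ j, B (μt j) = {j} := by
    intro j; ext i
    simp [hB, hμt.eq_iff]
  have hAe : ∀ ν, (¬∃ j, μ j = ν) → A ν = ∅ := by
    intro ν h; ext i; simp only [hA, mem_filter, mem_univ, true_and, notMem_empty, iff_false]
    exact fun hi => h ⟨i, hi⟩
  have hBe : ∀ ν, (¬∃ j, μt j = ν) → B ν = ∅ := by
    intro ν h; ext i; simp only [hB, mem_filter, mem_univ, true_and, notMem_empty, iff_false]
    exact fun hi => h ⟨i, hi⟩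
  have hμmem : ∀ j, μ j ∈ s := fun j =>
    mem_union_left _ (mem_image_of_mem μ (mem_univ j))
  have hμtmem : ∀ j, μt j ∈ s := fun j =>
    mem_union_right _ (mem_image_of_mem μt (mem_univ j))
  -- sum identity
  have hsum : ∀ x : ℝ, ∑ ν ∈ s, (Q ν).eval x * Real.exp (ν * x) =
      (∑ j, (P j).eval x * Real.exp (μ j * x)) -
        ∑ j, (Pt j).eval x * Real.exp (μt j * x) := by
    intro x
    have h1 : ∑ ν ∈ s, ∑ j ∈ A ν, (P j).eval x * Real.exp (μ j * x)
        = ∑ j, (P j).eval x * Real.exp (μ j * x) :=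
      Finset.sum_fiberwise_of_maps_to (fun j _ => hμmem j) _
    have h2 : ∑ ν ∈ s, ∑ j ∈ B ν, (Pt j).eval x * Real.exp (μt j * x)
        = ∑ j, (Pt j).eval x * Real.exp (μt j * x) :=
      Finset.sum_fiberwise_of_maps_to (fun j _ => hμtmem j) _
    rw [← h1, ← h2, ← Finset.sum_sub_distrib]
    refine Finset.sum_congr rfl fun ν hν => ?_
    have e1 : ∑ j ∈ A ν, (P j).eval x * Real.exp (μ j * x)
        = (∑ j ∈ A ν, P j).eval x * Real.exp (ν * x) := by
      rw [Polynomial.eval_finset_sum, Finset.sum_mul]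
      refine Finset.sum_congr rfl fun j hj => ?_
      rw [(mem_filter.mp hj).2]
    have e2 : ∑ j ∈ B ν, (Pt j).eval x * Real.exp (μt j * x)
        = (∑ j ∈ B ν, Pt j).eval x * Real.exp (ν * x) := by
      rw [Polynomial.eval_finset_sum, Finset.sum_mul]
      refine Finset.sum_congr rfl fun j hj => ?_
      rw [(mem_filter.mp hj).2]
    rw [hQ]
    simp only [Polynomial.eval_sub, sub_mul]
    rw [e1, e2]
  have hz : ∀ l : Fin T, ∑ ν ∈ s, (Q ν).eval (t l) * Real.exp (ν * t l) = 0 := by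
    intro l
    rw [hsum, sub_eq_zero]
    exact hinterp l
  -- weight bound
  have hwb : ∀ ν ∈ s, (Q ν).natDegree + 1 ≤ (∑ j ∈ A ν, m j) + (∑ j ∈ B ν, m j) := by
    intro ν hν
    by_cases h1 : ∃ j, μ j = ν
    · obtain ⟨j, rfl⟩ := h1
      rw [hAj j]
      by_cases h2 : ∃ j', μt j' = μ j
      · obtain ⟨j', hj'⟩ := h2
        have hBν : B (μ j) = {j'} := by rw [← hj', hBj]
        rw [hBν]
        simp only [hQ, hAj, hBν, Finset.sum_singleton]
        have h3 := Polynomial.natDegree_sub_le (P j) (Pt j')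
        have h4 := hP j; have h5 := hPt j'
        rcases max_cases (P j).natDegree (Pt j').natDegree with ⟨heq, _⟩ | ⟨heq, _⟩ <;>
          rw [heq] at h3 <;> omega
      · rw [hBe _ h2]
        simp only [hQ, hAj, hBe _ h2, Finset.sum_singleton, Finset.sum_empty, sub_zero]
        have := hP j
        omega
    · have hAν := hAe ν h1
      have h2 : ∃ j', μt j' = ν := by
        rcases Finset.mem_union.mp hν with h | h
        · obtain ⟨j, _, hj⟩ := Finset.mem_image.mp h
          exact absurd ⟨j, hj⟩ h1
        · obtain ⟨j, _, hj⟩ := Finset.mem_image.mp h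
          exact ⟨j, hj⟩
      obtain ⟨j', rfl⟩ := h2
      rw [hAν, hBj j']
      simp only [hQ, hAν, hBj, Finset.sum_singleton, Finset.sum_empty, zero_sub,
        Polynomial.natDegree_neg]
      have := hPt j'
      omega
  have htot : (∑ ν ∈ s.filter (fun ν => Q ν ≠ 0), ((Q ν).natDegree + 1)) ≤ T := by
    calc (∑ ν ∈ s.filter (fun ν => Q ν ≠ 0), ((Q ν).natDegree + 1))
        ≤ ∑ ν ∈ s, ((Q ν).natDegree + 1) :=
          Finset.sum_le_sum_of_subset (Finset.filter_subset _ _)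
      _ ≤ ∑ ν ∈ s, ((∑ j ∈ A ν, m j) + (∑ j ∈ B ν, m j)) := Finset.sum_le_sum hwb
      _ = (∑ ν ∈ s, ∑ j ∈ A ν, m j) + (∑ ν ∈ s, ∑ j ∈ B ν, m j) := Finset.sum_add_distrib
      _ = (∑ j, m j) + (∑ j, m j) := by
          rw [Finset.sum_fiberwise_of_maps_to (fun j _ => hμmem j),
            Finset.sum_fiberwise_of_maps_to (fun j _ => hμtmem j)]
      _ ≤ T := by omega
  have hQ0 : ∀ ν ∈ s, Q ν = 0 := expPoly_key T s Q htot T le_rfl t ht hz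
  -- extracting consequences
  have hPj : ∀ j j', μ j = μt j' → P j = Pt j' := by
    intro j j' hjj'
    have h := hQ0 (μ j) (hμmem j)
    have hBν : B (μ j) = {j'} := by rw [hjj', hBj]
    rw [hQ] at h
    simp only [hAj, hBν, Finset.sum_singleton] at h
    exact sub_eq_zero.mp h
  have hP0 : ∀ j, (¬∃ j', μt j' = μ j) → P j = 0 := by
    intro j h
    have h0 := hQ0 (μ j) (hμmem j)
    rw [hQ] at h0
    simp only [hAj, hBe _ h, Finset.sum_singleton, Finset.sum_empty, sub_zero] at h0
    exact h0
  have hPt0 : ∀ j', (¬∃ j, μ j = μt j') → Pt j' = 0 := by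
    intro j' h
    have h0 := hQ0 (μt j') (hμtmem j')
    rw [hQ] at h0
    simp only [hBj, hAe _ h, Finset.sum_singleton, Finset.sum_empty, zero_sub, neg_eq_zero] at h0
    exact h0
  have hmatch : ∀ j, P j ≠ 0 → ∃ j', μt j' = μ j := by
    intro j hj; by_contra h; exact hj (hP0 j h)
  have hmatch' : ∀ j', Pt j' ≠ 0 → ∃ j, μ j = μt j' := by
    intro j' hj; by_contra h; exact hj (hPt0 j' h)
  -- the bijection on supports
  let f : {j // P j ≠ 0} → {j // Pt j ≠ 0} := fun x =>
    ⟨(hmatch x.1 x.2).choose, by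
      rw [← hPj x.1 _ (hmatch x.1 x.2).choose_spec.symm]; exact x.2⟩
  let g : {j // Pt j ≠ 0} → {j // P j ≠ 0} := fun y =>
    ⟨(hmatch' y.1 y.2).choose, by
      rw [hPj _ y.1 (hmatch' y.1 y.2).choose_spec]; exact y.2⟩
  have hgf : ∀ x, g (f x) = x := by
    intro x
    apply Subtype.ext
    exact hμ ((hmatch' (f x).1 (f x).2).choose_spec.trans (hmatch x.1 x.2).choose_spec)
  have hfg : ∀ y, f (g y) = y := by
    intro y
    apply Subtype.ext
    exact hμt ((hmatch (g y).1 (g y).2).choose_spec.trans (hmatch' y.1 y.2).choose_spec)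
  let e1 : {j // P j ≠ 0} ≃ {j // Pt j ≠ 0} := ⟨f, g, hgf, hfg⟩
  let e2 : {j // ¬P j ≠ 0} ≃ {j // ¬Pt j ≠ 0} := Fintype.equivOfCardEq (by
    have h1 := Fintype.card_subtype_compl (fun j : Fin p => P j ≠ 0)
    have h2 := Fintype.card_subtype_compl (fun j : Fin p => Pt j ≠ 0)
    rw [h1, h2, Fintype.card_congr e1])
  let σ : Equiv.Perm (Fin p) :=
    ((Equiv.sumCompl (fun j => P j ≠ 0)).symm.trans
      ((e1.sumCongr e2).trans (Equiv.sumCompl (fun j => Pt j ≠ 0))))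
  have hσpos : ∀ (j : Fin p) (h : P j ≠ 0), σ j = (f ⟨j, h⟩).1 := by
    intro j h
    show (Equiv.sumCompl fun j => Pt j ≠ 0)
      ((e1.sumCongr e2) ((Equiv.sumCompl fun j => P j ≠ 0).symm j)) = (f ⟨j, h⟩).1
    rw [Equiv.sumCompl_symm_apply_of_pos (p := fun j => P j ≠ 0) h]
    rfl
  have hσneg : ∀ (j : Fin p) (h : ¬P j ≠ 0), Pt (σ j) = 0 := by
    intro j h
    have : σ j = (e2 ⟨j, h⟩).1 := by
      show (Equiv.sumCompl fun j => Pt j ≠ 0)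
        ((e1.sumCongr e2) ((Equiv.sumCompl fun j => P j ≠ 0).symm j)) = (e2 ⟨j, h⟩).1
      rw [Equiv.sumCompl_symm_apply_of_neg (p := fun j => P j ≠ 0) h]
      rfl
    rw [this]
    have := (e2 ⟨j, h⟩).2
    push_neg at this
    exact this
  refine ⟨σ, ?_, ?_⟩
  · intro j
    by_cases h : P j ≠ 0
    · rw [hσpos j h]
      exact hPj j _ (hmatch j h).choose_spec.symm
    · rw [hσneg j h]
      push_neg at h
      exact h
  · intro j hj
    rw [hσpos j hj]
    exact (hmatch j hj).choose_spec.symm
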